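/- Let Δ : Matrix (Fin 2) (Fin 2) ℂ → Matrix (Fin 2) (Fin 2) ℂ denote decoherence in the computational basis, Δ(τ) i j = τ i j if i = j and 0 otherwise. Let ρ be a density matrix on Fin 2 and let ε be real with 0 < ε < 1. Then a density matrix τ on Fin 2 satisfies τ = (1−ε) • Δ(τ) + ε • Δ(ρ) if and only if τ = Δ(ρ); that is, the decoherence of ρ in the Z basis is the unique solution. Moreover, for ε = 0 the equation τ = Δ(τ) is satisfied exactly by the diagonal density matrices (those with τ i j = 0 whenever i ≠ j). -/
import Mathlib

open scoped ComplexOrder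

/-- Decoherence in the computational basis. -/
noncomputable def deco (τ : Matrix (Fin 2) (Fin 2) ℂ) : Matrix (Fin 2) (Fin 2) ℂ :=
  Matrix.of fun i j => if i = j then τ i j else 0

lemma deco_idem (ρ : Matrix (Fin 2) (Fin 2) ℂ) : deco (deco ρ) = deco ρ := by
  ext i j; by_cases hij : i = j <;> simp [deco, hij]

/-- For the controlled-SWAP D-CTC circuit: for `0 < ε < 1` the unique
density-matrix solution of `τ = (1−ε)Δ(τ) + εΔ(ρ)` is `Δ(ρ)`, while for `ε = 0`
the equation `τ = Δ(τ)` is satisfied exactly by the diagonal density matrices. -/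
theorem dctc_controlled_swap_fixed_points
    (ρ : Matrix (Fin 2) (Fin 2) ℂ) (hρ : ρ.PosSemidef) (hρtr : ρ.trace = 1)
    (ε : ℝ) (h0 : 0 < ε) (h1 : ε < 1) :
    (∀ τ : Matrix (Fin 2) (Fin 2) ℂ, τ.PosSemidef → τ.trace = 1 →
      (τ = (1 - ε) • deco τ + ε • deco ρ ↔ τ = deco ρ)) ∧
    (∀ τ : Matrix (Fin 2) (Fin 2) ℂ, τ.PosSemidef → τ.trace = 1 →
      (τ = deco τ ↔ ∀ i j : Fin 2, i ≠ j → τ i j = 0)) := by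
  constructor
  · intro τ _ _
    constructor
    · intro h
      have hoff : ∀ i j, i ≠ j → τ i j = 0 := by
        intro i j hij
        have h' := congrFun (congrFun h i) j
        simpa [deco, Matrix.add_apply, Matrix.smul_apply, hij] using h'
      have hdiag : deco τ = τ := by
        ext i j
        by_cases hij : i = j
        · simp [deco, hij]
        · simp [deco, hij, hoff i j hij]
      rw [hdiag] at h
      have key : ε • τ = ε • deco ρ := by
        have h2 : τ - (1 - ε) • τ = ε • deco ρ := by
          nth_rewrite 1 [h]; rw [add_comm]; exact add_sub_cancel_right _ _
        calc ε • τ = (1 - (1 - ε)) • τ := by norm_num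
          _ = τ - (1 - ε) • τ := by rw [sub_smul, one_smul]
          _ = ε • deco ρ := h2
      exact smul_right_injective _ (ne_of_gt h0) key
    · intro h
      subst h
      rw [deco_idem, ← add_smul]
      simp
  · intro τ _ _
    constructor
    · intro h i j hij
      have h' := congrFun (congrFun h i) j
      simpa [deco, hij] using h'
    · intro h
      ext i j
      by_cases hij : i = j
      · simp [deco, hij]
      · simp [deco, hij, h i j hij]
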